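/- Let (T,κ) be a finite tree (a connected digital image whose underlying graph is connected and acyclic) and let A be the set of vertices of T of degree 1. Then A is an (m,m)-limiting set for (T,κ) for each m ∈ {0,1}; and for m = 1, A is a minimal (1,1)-limiting set if and only if #T ≠ 2. -/

import Mathlib

open SimpleGraph

/-- A function between digital images (graphs) is digitally continuous if adjacent
points map to equal or adjacent points. -/
def DigContinuous {V W : Type*} (G : SimpleGraph V) (H : SimpleGraph W) (f : V → W) : Prop :=
  ∀ x y : V, G.Adj x y → f x = f y ∨ H.Adj (f x) (f y)

/-- `f` restricted to `A` is an `m`-map: it moves each point of `A` a graph distance of at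
most `m`. -/
def IsMMapOn {V : Type*} (G : SimpleGraph V) (f : V → V) (A : Set V) (m : ℕ) : Prop :=
  ∀ a ∈ A, G.dist a (f a) ≤ m

/-- `A` is an `(m,n)`-limiting set for `(X,κ)`: every continuous self-map whose restriction
to `A` is an `m`-map is an `n`-map. -/
def IsLimiting {V : Type*} (G : SimpleGraph V) (A : Set V) (m n : ℕ) : Prop :=
  ∀ f : V → V, DigContinuous G G f → IsMMapOn G f A m → IsMMapOn G f Set.univ n

/-- `A` is a minimal `(m,n)`-limiting set: it is limiting and no proper subset is. -/
def IsMinimalLimiting {V : Type*} (G : SimpleGraph V) (A : Set V) (m n : ℕ) : Prop :=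
  IsLimiting G A m n ∧ ∀ B : Set V, B ⊂ A → ¬ IsLimiting G B m n


section Aux

variable {V : Type*} {G : SimpleGraph V}

/-- In a tree, every path has length equal to the distance between its endpoints. -/
lemma tree_path_length (hT : G.IsTree) {u v : V} {p : G.Walk u v} (hp : p.IsPath) :
    p.length = G.dist u v := by
  obtain ⟨q, hq, hql⟩ := SimpleGraph.Connected.exists_path_of_dist hT.isConnected u v
  have h := hT.IsAcyclic.path_unique ⟨p, hp⟩ ⟨q, hq⟩
  rw [← hql]
  exact congrArg SimpleGraph.Walk.length (congrArg Subtype.val h)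

/-- Continuous maps are nonexpansive. -/
lemma dist_map_le (hc : G.Connected) {f : V → V} (hf : DigContinuous G G f) (x y : V) :
    G.dist (f x) (f y) ≤ G.dist x y := by
  obtain ⟨p, hp⟩ := hc.exists_walk_length_eq_dist x y
  rw [← hp]
  clear hp
  induction p with
  | nil => simp
  | @cons a b c h q ih =>
    rcases hf a b h with he | ha
    · rw [SimpleGraph.Walk.length_cons, he]
      exact le_trans ih (Nat.le_succ _)
    · calc G.dist (f a) (f c) ≤ G.dist (f a) (f b) + G.dist (f b) (f c) :=
            hc.dist_triangle
        _ ≤ 1 + q.length := by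
            have h1 : G.dist (f a) (f b) ≤ 1 := by
              rw [← SimpleGraph.dist_eq_one_iff_adj] at ha
              omega
            omega
        _ = (SimpleGraph.Walk.cons h q).length := by
            rw [SimpleGraph.Walk.length_cons]; omega

lemma grow [Fintype V] [DecidableEq V] {y x : V} :
    ∀ (n : ℕ) (a : V) (p : G.Walk a y), p.IsPath → x ∈ p.support →
      Fintype.card V ≤ p.support.length + n →
      ∃ (b : V) (q : G.Walk b y), q.IsPath ∧ x ∈ q.support ∧
        ∀ u, G.Adj b u → u ∈ q.support := by
  intro n
  induction n with
  | zero =>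
    intro a p hp hx hcard
    refine ⟨a, p, hp, hx, fun u _ => ?_⟩
    -- support is all of V
    have hnodup := hp.support_nodup
    have hlen : p.support.toFinset.card = p.support.length := List.toFinset_card_of_nodup hnodup
    have huniv : p.support.toFinset = Finset.univ := by
      apply Finset.eq_univ_of_card
      have := List.Nodup.length_le_card hnodup
      omega
    have : u ∈ p.support.toFinset := huniv ▸ Finset.mem_univ u
    exact List.mem_toFinset.mp this
  | succ n ih =>
    intro a p hp hx hcard
    by_cases hall : ∀ u, G.Adj a u → u ∈ p.support
    · exact ⟨a, p, hp, hx, hall⟩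
    · push_neg at hall
      obtain ⟨u, hadj, hu⟩ := hall
      refine ih u (SimpleGraph.Walk.cons hadj.symm p) (hp.cons hu) ?_ ?_
      · rw [SimpleGraph.Walk.support_cons]; exact List.mem_cons_of_mem _ hx
      · rw [SimpleGraph.Walk.support_cons]
        simp only [List.length_cons]
        omega

lemma exists_leaf [Fintype V] [DecidableEq V] [DecidableRel G.Adj] (hT : G.IsTree) {x y : V} (hxy : x ≠ y) :
    ∃ a, G.degree a = 1 ∧ G.dist a y = G.dist a x + G.dist x y := by
  obtain ⟨p₀, hp₀, _⟩ := SimpleGraph.Connected.exists_path_of_dist hT.isConnected x y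
  obtain ⟨b, q, hq, hxq, hclosed⟩ :=
    grow (G := G) (Fintype.card V) x p₀ hp₀ (SimpleGraph.Walk.start_mem_support _)
      (Nat.le_add_left _ _)
  -- q is nonempty
  cases q with
  | nil =>
    simp only [SimpleGraph.Walk.support_nil, List.mem_singleton] at hxq
    exact absurd hxq hxy
  | @cons b w y h r =>
    have hq' : SimpleGraph.Walk.IsPath r ∧ b ∉ r.support :=
      (SimpleGraph.Walk.cons_isPath_iff h r).mp hq
    -- every neighbor of b equals w
    have huniq : ∀ u, G.Adj b u → u = w := by
      intro u hu
      by_contra hne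
      have husup : u ∈ (SimpleGraph.Walk.cons h r).support := hclosed u hu
      rw [SimpleGraph.Walk.support_cons, List.mem_cons] at husup
      rcases husup with rfl | husup
      · exact G.irrefl hu
      have hbr : b ∉ (r.takeUntil u husup).support :=
        fun hb => hq'.2 (SimpleGraph.Walk.support_takeUntil_subset _ _ hb)
      have hP2 : (SimpleGraph.Walk.cons h (r.takeUntil u husup)).IsPath :=
        (hq'.1.takeUntil husup).cons hbr
      have hP1 : (SimpleGraph.Walk.cons hu SimpleGraph.Walk.nil).IsPath := by
        rw [SimpleGraph.Walk.cons_isPath_iff]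
        constructor
        · exact SimpleGraph.Walk.IsPath.nil
        · simp only [SimpleGraph.Walk.support_nil, List.mem_singleton]
          exact G.ne_of_adj hu
      have heq := hT.IsAcyclic.path_unique
        ⟨SimpleGraph.Walk.cons hu SimpleGraph.Walk.nil, hP1⟩
        ⟨SimpleGraph.Walk.cons h (r.takeUntil u husup), hP2⟩
      have hlen := congrArg SimpleGraph.Walk.length (congrArg Subtype.val heq)
      simp only [SimpleGraph.Walk.length_cons, SimpleGraph.Walk.length_nil] at hlen
      have : w = u := SimpleGraph.Walk.eq_of_length_eq_zero (p := r.takeUntil u husup) (by omega)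
      exact hne this.symm
    refine ⟨b, ?_, ?_⟩
    · -- degree b = 1
      have : G.neighborFinset b = {w} := by
        ext u
        simp only [SimpleGraph.mem_neighborFinset, Finset.mem_singleton]
        exact ⟨fun hu => huniq u hu, fun hu => hu ▸ h⟩
      rw [← SimpleGraph.card_neighborFinset_eq_degree, this, Finset.card_singleton]
    · -- distance equation
      have hsplit := ((SimpleGraph.Walk.cons h r).take_spec hxq)
      have hlen := congrArg SimpleGraph.Walk.length hsplit
      rw [SimpleGraph.Walk.length_append] at hlen
      have h1 := tree_path_length hT (hq.takeUntil hxq)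
      have h2 := tree_path_length hT (hq.dropUntil hxq)
      have h3 := tree_path_length hT hq
      rw [h1, h2, h3] at hlen
      omega

lemma key [Fintype V] [DecidableEq V] [DecidableRel G.Adj] (hT : G.IsTree) {f : V → V}
    (hf : DigContinuous G G f) (m : ℕ)
    (hA : ∀ a, G.degree a = 1 → G.dist a (f a) ≤ m) (x : V) : G.dist x (f x) ≤ m := by
  by_cases hfx : x = f x
  · rw [← hfx, SimpleGraph.dist_self]; exact Nat.zero_le m
  obtain ⟨a, ha, hd⟩ := exists_leaf hT (y := f x) hfx
  have h1 : G.dist a (f x) ≤ G.dist a (f a) + G.dist (f a) (f x) := hT.isConnected.dist_triangle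
  have h2 := dist_map_le hT.isConnected hf a x
  have h3 := hA a ha
  omega

lemma dist_le_one_of_card_two [Fintype V] (hconn : G.Connected) (h2 : Fintype.card V = 2)
    (x y : V) : G.dist x y ≤ 1 := by
  obtain ⟨p, hp, hl⟩ := hconn.exists_path_of_dist x y
  have := hp.length_lt
  omega

end Aux

theorem stmt9 {V : Type*} [Fintype V] (G : SimpleGraph V) [DecidableRel G.Adj]
    (hT : G.IsTree) :
    (∀ m ∈ ({0, 1} : Set ℕ), IsLimiting G {x : V | G.degree x = 1} m m) ∧
    (IsMinimalLimiting G {x : V | G.degree x = 1} 1 1 ↔ Fintype.card V ≠ 2) := by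
  classical
  have hconn := hT.isConnected
  have hlim : ∀ m : ℕ, IsLimiting G {x : V | G.degree x = 1} m m := by
    intro m f hf hfA x _
    exact key hT hf m (fun a ha => hfA a ha) x
  refine ⟨fun m _ => hlim m, ?_, ?_⟩
  · -- minimal → card ≠ 2
    rintro ⟨-, hmin⟩ h2
    obtain ⟨u, v, huv, huniv⟩ := (Nat.card_eq_two_iff (α := V)).mp
      (by rw [Nat.card_eq_fintype_card]; exact h2)
    have hmem : ∀ w : V, w = u ∨ w = v := by
      intro w
      have : w ∈ ({u, v} : Set V) := huniv ▸ Set.mem_univ w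
      simpa using this
    have hadj : G.Adj u v := by
      have hle := dist_le_one_of_card_two hconn h2 u v
      have hpos := hconn.pos_dist_of_ne huv
      exact SimpleGraph.dist_eq_one_iff_adj.mp (by omega)
    have hdeg : ∀ w : V, G.degree w = 1 := by
      intro w
      rcases hmem w with rfl | rfl
      · have hns : G.neighborFinset w = {v} := by
          ext z
          simp only [SimpleGraph.mem_neighborFinset, Finset.mem_singleton]
          refine ⟨fun hz => ?_, fun hz => hz ▸ hadj⟩
          rcases hmem z with rfl | rfl
          · exact absurd hz G.irrefl
          · rfl
        rw [← SimpleGraph.card_neighborFinset_eq_degree, hns, Finset.card_singleton]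
      · have hns : G.neighborFinset w = {u} := by
          ext z
          simp only [SimpleGraph.mem_neighborFinset, Finset.mem_singleton]
          refine ⟨fun hz => ?_, fun hz => hz ▸ hadj.symm⟩
          rcases hmem z with rfl | rfl
          · rfl
          · exact absurd hz G.irrefl
        rw [← SimpleGraph.card_neighborFinset_eq_degree, hns, Finset.card_singleton]
    refine hmin {u} ⟨?_, ?_⟩ ?_
    · intro z hz
      rw [Set.mem_singleton_iff] at hz
      subst hz
      exact hdeg z
    · intro hsub
      have hv : v ∈ {x : V | G.degree x = 1} := hdeg v
      have := hsub hv
      rw [Set.mem_singleton_iff] at this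
      exact huv this.symm
    · intro f _ _ x _
      exact dist_le_one_of_card_two hconn h2 x (f x)
  · -- card ≠ 2 → minimal
    intro hcard
    refine ⟨hlim 1, ?_⟩
    intro B hB hBlim
    obtain ⟨a, haA, haB⟩ := Set.exists_of_ssubset hB
    have haA' : G.degree a = 1 := haA
    have hcard1 : (G.neighborFinset a).card = 1 := by
      rw [SimpleGraph.card_neighborFinset_eq_degree]; exact haA'
    obtain ⟨b, hb⟩ := Finset.card_eq_one.mp hcard1
    have hab : G.Adj a b := by
      rw [← SimpleGraph.mem_neighborFinset, hb]
      exact Finset.mem_singleton_self b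
    have huniq : ∀ u, G.Adj a u → u = b := by
      intro u hu
      have hu' : u ∈ G.neighborFinset a := by
        rw [SimpleGraph.mem_neighborFinset]; exact hu
      rw [hb] at hu'
      exact Finset.mem_singleton.mp hu'
    have hcard3 : 3 ≤ Fintype.card V := by
      have : Nontrivial V := ⟨a, b, G.ne_of_adj hab⟩
      have h2 := Fintype.one_lt_card (α := V)
      omega
    obtain ⟨c, hca, hcb⟩ : ∃ c : V, c ≠ a ∧ c ≠ b := by
      by_contra h
      push_neg at h
      have huniv : ({a, b} : Finset V) = Finset.univ := by
        apply Finset.eq_univ_iff_forall.mpr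
        intro z
        rcases eq_or_ne z a with rfl | hz
        · simp
        · rcases h z hz with rfl; simp
      have hle : ({a, b} : Finset V).card ≤ 2 := by
        apply (Finset.card_insert_le _ _).trans
        simp
      rw [huniv, Finset.card_univ] at hle
      omega
    obtain ⟨c', hbc', hc'a⟩ : ∃ c', G.Adj b c' ∧ c' ≠ a := by
      by_contra h
      push_neg at h
      obtain ⟨p, hp, -⟩ := hconn.exists_path_of_dist a c
      cases p with
      | nil => exact hca rfl
      | @cons a w c h1 r =>
        have hw : w = b := huniq w h1
        subst hw
        have hpr := (SimpleGraph.Walk.cons_isPath_iff h1 r).mp hp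
        cases r with
        | nil => exact hcb rfl
        | @cons b w2 c h2 r2 =>
          have hw2 : w2 = a := h w2 h2
          have ha2 : a ∈ (SimpleGraph.Walk.cons h2 r2).support := by
            rw [SimpleGraph.Walk.support_cons]
            exact List.mem_cons_of_mem _ (hw2 ▸ SimpleGraph.Walk.start_mem_support r2)
          exact hpr.2 ha2
    have hc'b : c' ≠ b := fun h => G.irrefl (h ▸ hbc')
    have hfa : (fun z => if z = a then c' else z) a = c' := if_pos rfl
    have hfz : ∀ z : V, z ≠ a → (fun z => if z = a then c' else z) z = z :=
      fun z hz => if_neg hz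
    have hcont : DigContinuous G G (fun z => if z = a then c' else z) := by
      intro z w hzw
      by_cases hz : z = a
      · subst hz
        have hwb : w = b := huniq w hzw
        have hwa : w ≠ z := fun h => G.irrefl (h ▸ hzw)
        right
        rw [hfa, hfz w hwa, hwb]
        exact hbc'.symm
      · by_cases hw : w = a
        · subst hw
          have hzb : z = b := huniq z hzw.symm
          right
          rw [hfa, hfz z hz, hzb]
          exact hbc'
        · right
          rw [hfz z hz, hfz w hw]
          exact hzw
    have hBmap : IsMMapOn G (fun z => if z = a then c' else z) B 1 := by
      intro z hz
      have hza : z ≠ a := fun h => haB (h ▸ hz)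
      rw [hfz z hza, SimpleGraph.dist_self]
      omega
    have hfin := hBlim _ hcont hBmap a (Set.mem_univ a)
    rw [hfa] at hfin
    have hnadj : ¬ G.Adj a c' := fun h => hc'b (huniq c' h)
    have hac' : a ≠ c' := fun h => hc'a h.symm
    have hd0 := hconn.pos_dist_of_ne hac'
    have hd1 : G.dist a c' ≠ 1 := fun h => hnadj (SimpleGraph.dist_eq_one_iff_adj.mp h)
    omega
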